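/- For every t, θ ∈ ℝ one has det K(t,θ) = e^{2t} ≠ 0, and for every τ, θ ∈ ℝ the matrix-valued function Y(t,τ,θ) = K(t,θ) · K(τ,θ)⁻¹ satisfies dY/dt(t,τ,θ) = Dψ(x₀(t+θ)) · Y(t,τ,θ) together with the initial condition Y(τ,τ,θ) = I. -/

import Mathlib

open Real Matrix

/-- `x₀(θ) = (sin θ, cos θ)`. -/
noncomputable def x0 (θ : ℝ) : Fin 2 → ℝ := ![Real.sin θ, Real.cos θ]

/-- `K(t,θ)` is the `2×2` matrix with rows `(cos(t+θ), e^{2t} sin(t+θ))` and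
`(−sin(t+θ), e^{2t} cos(t+θ))`. -/
noncomputable def K (t θ : ℝ) : Matrix (Fin 2) (Fin 2) ℝ :=
  !![Real.cos (t + θ), Real.exp (2 * t) * Real.sin (t + θ);
     -Real.sin (t + θ), Real.exp (2 * t) * Real.cos (t + θ)]

/-- `Dψ(x₀(a))`: the Jacobian matrix of `ψ` at `x₀(a)`, i.e. the `2×2` matrix with rows
`(2sin²a, 2 sin a cos a + 1)` and `(2 sin a cos a − 1, 2cos²a)`. -/
noncomputable def DpsiX0 (a : ℝ) : Matrix (Fin 2) (Fin 2) ℝ :=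
  !![2 * Real.sin a ^ 2, 2 * Real.sin a * Real.cos a + 1;
     2 * Real.sin a * Real.cos a - 1, 2 * Real.cos a ^ 2]

/-- `Y(t,τ,θ) = K(t,θ)·K(τ,θ)⁻¹`. -/
noncomputable def Y (t τ θ : ℝ) : Matrix (Fin 2) (Fin 2) ℝ := K t θ * (K τ θ)⁻¹

/-- formula (39) of the paper.  For every `t, θ ∈ ℝ` one has
`det K(t,θ) = e^{2t} ≠ 0`, and for every `τ, θ ∈ ℝ` the matrix-valued function
`Y(t,τ,θ) = K(t,θ)·K(τ,θ)⁻¹` satisfies `dY/dt(t,τ,θ) = Dψ(x₀(t+θ)) · Y(t,τ,θ)`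
(stated entrywise) together with the initial condition `Y(τ,τ,θ) = I`. -/
lemma Kderiv (θ t : ℝ) (i j : Fin 2) :
    HasDerivAt (fun t => K t θ i j) ((DpsiX0 (t + θ) * K t θ) i j) t := by
  have hs : HasDerivAt (fun t : ℝ => Real.sin (t + θ)) (Real.cos (t + θ)) t := by
    simpa [Function.comp_def] using (Real.hasDerivAt_sin (t + θ)).comp t ((hasDerivAt_id t).add_const θ)
  have hc : HasDerivAt (fun t : ℝ => Real.cos (t + θ)) (-Real.sin (t + θ)) t := by
    simpa [Function.comp_def] using (Real.hasDerivAt_cos (t + θ)).comp t ((hasDerivAt_id t).add_const θ)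
  have he : HasDerivAt (fun t : ℝ => Real.exp (2 * t)) (2 * Real.exp (2 * t)) t := by
    have := ((hasDerivAt_id t).const_mul 2).exp
    simpa [mul_comm] using this
  have hpyth := Real.sin_sq_add_cos_sq (t + θ)
  fin_cases i <;> fin_cases j <;>
    simp [K, DpsiX0, Matrix.mul_apply, Fin.sum_univ_two]
  · convert hc using 1; ring
  · refine (he.mul hs).congr_deriv ?_
    linear_combination (-2 * Real.exp (2 * t) * Real.sin (t + θ)) * hpyth
  · refine hs.neg.congr_deriv ?_; ring
  · refine (he.mul hc).congr_deriv ?_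
    linear_combination (-2 * Real.exp (2 * t) * Real.cos (t + θ)) * hpyth

theorem stmt12 :
    (∀ t θ : ℝ, (K t θ).det = Real.exp (2 * t) ∧ Real.exp (2 * t) ≠ 0) ∧
    ∀ τ θ : ℝ,
      (∀ t : ℝ, ∀ i j : Fin 2,
        HasDerivAt (fun t => Y t τ θ i j) ((DpsiX0 (t + θ) * Y t τ θ) i j) t) ∧
      Y τ τ θ = 1 := by
  have hdet : ∀ t θ : ℝ, (K t θ).det = Real.exp (2 * t) := by
    intro t θ
    have hpyth := Real.sin_sq_add_cos_sq (t + θ)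
    simp [K, Matrix.det_fin_two_of]
    linear_combination Real.exp (2 * t) * hpyth
  refine ⟨fun t θ => ⟨hdet t θ, Real.exp_ne_zero _⟩, fun τ θ => ⟨fun t i j => ?_, ?_⟩⟩
  · have h := ((Kderiv θ t i 0).mul_const ((K τ θ)⁻¹ 0 j)).add
      ((Kderiv θ t i 1).mul_const ((K τ θ)⁻¹ 1 j))
    have hfun : (fun t => Y t τ θ i j)
        = fun t => K t θ i 0 * (K τ θ)⁻¹ 0 j + K t θ i 1 * (K τ θ)⁻¹ 1 j := by
      funext t; simp [Y, Matrix.mul_apply, Fin.sum_univ_two]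
    rw [hfun]
    refine h.congr_deriv ?_
    simp [Y, ← Matrix.mul_assoc, Matrix.mul_apply, Fin.sum_univ_two]; ring
  · have : IsUnit (K τ θ).det := by
      rw [hdet]; exact (Real.exp_ne_zero _).isUnit
    simp [Y, Matrix.mul_nonsing_inv _ this]
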